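/- For every finite field 𝔽_q, every n ≥ 2, every i ∈ {1,...,n}, and every nonnegative integer λ, the probability that a uniformly random monic polynomial of degree n over 𝔽_q has exactly λ irreducible factors of degree i (counted with multiplicity) is at most e^{-cλ}, where c > 0 is an absolute constant independent of q, n, i, λ. -/

import Mathlib

open Polynomial

section Aux

open UniqueFactorizationMonoid Finset

set_option linter.unusedSectionVars false
namespace Stmt8

attribute [local instance] Classical.propDecidable

variable (F : Type) [Field F] [Fintype F]

noncomputable def phi (n : ℕ) (co : Fin n → F) : F[X] :=
  X ^ n + ∑ j : Fin n, C (co j) * X ^ (j : ℕ)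

theorem phi_coeff (n : ℕ) (co : Fin n → F) (k : ℕ) :
    (phi F n co).coeff k = if h : k < n then co ⟨k, h⟩ else if k = n then 1 else 0 := by
  rw [phi, coeff_add, coeff_X_pow, finset_sum_coeff]
  simp only [coeff_C_mul, coeff_X_pow]
  by_cases h : k < n
  · rw [Finset.sum_eq_single (⟨k, h⟩ : Fin n)]
    · simp [Nat.ne_of_lt h, h]
    · intro b _ hb
      simp only [mul_ite, mul_one, mul_zero, ite_eq_right_iff]
      intro hbk
      have : b = ⟨k, h⟩ := Fin.ext hbk.symm
      exact absurd this hb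
    · simp
  · have : ∀ b : Fin n, ¬ ((b : ℕ) = k) := by
      intro b hb; exact h (hb ▸ b.2)
    simp only [dif_neg h]
    rw [Finset.sum_eq_zero (fun b _ => by
      have hb := this b
      simp only [mul_ite, mul_one, mul_zero, ite_eq_right_iff]
      intro hkb; exact absurd hkb.symm hb)]
    by_cases hk : k = n <;> simp [hk]

theorem phi_monic (n : ℕ) (co : Fin n → F) : (phi F n co).Monic := by
  have h1 : (phi F n co).coeff n = 1 := by simp [phi_coeff]
  have h2 : ∀ k, n < k → (phi F n co).coeff k = 0 := by
    intro k hk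
    rw [phi_coeff]
    rw [dif_neg (by omega), if_neg (by omega)]
  have hdeg : (phi F n co).natDegree = n := by
    have hne : phi F n co ≠ 0 := fun h => by simp [h] at h1
    apply le_antisymm
    · exact natDegree_le_iff_coeff_eq_zero.2 h2
    · exact le_natDegree_of_ne_zero (by simp [h1])
  rw [Monic, leadingCoeff, hdeg, h1]

theorem phi_natDegree (n : ℕ) (co : Fin n → F) : (phi F n co).natDegree = n := by
  have h1 : (phi F n co).coeff n = 1 := by simp [phi_coeff]
  have h2 : ∀ k, n < k → (phi F n co).coeff k = 0 := fun k hk => by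
    rw [phi_coeff, dif_neg (by omega), if_neg (by omega)]
  apply le_antisymm
  · exact natDegree_le_iff_coeff_eq_zero.2 h2
  · exact le_natDegree_of_ne_zero (by simp [h1])

theorem phi_injective (n : ℕ) : Function.Injective (phi F n) := by
  intro a b hab
  funext j
  have := congrArg (fun f => Polynomial.coeff f (j : ℕ)) hab
  simpa [phi_coeff, j.2] using this

theorem phi_surj (n : ℕ) (f : F[X]) (hm : f.Monic) (hd : f.natDegree = n) :
    f = phi F n (fun j => f.coeff (j : ℕ)) := by
  ext k
  rw [phi_coeff]
  by_cases h : k < n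
  · simp [h]
  · rw [dif_neg h]
    by_cases hk : k = n
    · subst hk; simpa [← hd] using hm.coeff_natDegree
    · rw [if_neg hk]
      exact coeff_eq_zero_of_natDegree_lt (by omega)

noncomputable def Mon (d : ℕ) : Finset F[X] := Finset.univ.image (phi F d)

theorem mem_Mon (d : ℕ) (f : F[X]) : f ∈ Mon F d ↔ f.Monic ∧ f.natDegree = d := by
  constructor
  · rintro hf
    obtain ⟨co, -, rfl⟩ := Finset.mem_image.1 hf
    exact ⟨phi_monic F d co, phi_natDegree F d co⟩
  · rintro ⟨hm, hd⟩
    exact Finset.mem_image.2 ⟨_, Finset.mem_univ _, (phi_surj F d f hm hd).symm⟩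

theorem card_Mon (d : ℕ) : (Mon F d).card = Fintype.card F ^ d := by
  rw [Mon, Finset.card_image_of_injective _ (phi_injective F d), Finset.card_univ]
  simp [Fintype.card_fun]


theorem card_dvd_filter {p : F[X]} (hp : p.Monic) {e m : ℕ} (he : p.natDegree = e)
    (hem : e ≤ m) :
    ((Mon F m).filter (fun f => p ∣ f)).card = Fintype.card F ^ (m - e) := by
  rw [← card_Mon F (m - e)]
  apply Finset.card_bij' (fun f _ => f / p) (fun g _ => p * g)
  · intro f hf
    simp only [Finset.mem_filter, mem_Mon] at hf ⊢
    obtain ⟨⟨hm, hd⟩, g, rfl⟩ := hf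
    rw [mul_div_cancel_left₀ _ hp.ne_zero]
    have hg : g.Monic := hp.of_mul_monic_left hm
    constructor
    · exact hg
    · have := hp.natDegree_mul hg
      omega
  · intro g hg
    rw [mem_Mon] at hg
    simp only [Finset.mem_filter, mem_Mon]
    refine ⟨⟨hp.mul hg.1, ?_⟩, Dvd.intro _ rfl⟩
    rw [hp.natDegree_mul hg.1]
    omega
  · intro f hf
    simp only [Finset.mem_filter] at hf
    obtain ⟨-, g, rfl⟩ := hf
    rw [mul_div_cancel_left₀ _ hp.ne_zero]
  · intro g hg
    rw [mul_div_cancel_left₀ _ hp.ne_zero]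

theorem card_root_filter {m : ℕ} (hm : 1 ≤ m) (a : F) :
    ((Mon F m).filter (fun f => f.eval a = 0)).card = Fintype.card F ^ (m - 1) := by
  rw [← card_dvd_filter F (monic_X_sub_C a) (natDegree_X_sub_C a) hm]
  congr 1
  apply Finset.filter_congr
  intro f _
  simp [dvd_iff_isRoot, IsRoot]

theorem two_dvd_iff {a b : F} (hab : a ≠ b) (f : F[X]) :
    ((X - C a) * (X - C b)) ∣ f ↔ f.eval a = 0 ∧ f.eval b = 0 := by
  constructor
  · rintro ⟨g, rfl⟩
    simp [sub_eq_zero, hab, hab.symm]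
  · rintro ⟨ha, hb⟩
    obtain ⟨g, rfl⟩ := (dvd_iff_isRoot).2 ha
    have : g.eval b = 0 := by
      have := hb
      simp only [eval_mul, eval_sub, eval_X, eval_C] at this
      rcases mul_eq_zero.1 this with h | h
      · exact absurd (sub_eq_zero.1 h) (Ne.symm hab)
      · exact h
    obtain ⟨h, rfl⟩ := (dvd_iff_isRoot).2 this
    exact ⟨h, by ring⟩

theorem card_two_root_filter {m : ℕ} (hm : 2 ≤ m) {a b : F} (hab : a ≠ b) :
    ((Mon F m).filter (fun f => f.eval a = 0 ∧ f.eval b = 0)).card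
      = Fintype.card F ^ (m - 2) := by
  have hmon : ((X - C a) * (X - C b)).Monic := (monic_X_sub_C a).mul (monic_X_sub_C b)
  have hdeg : ((X - C a) * (X - C b)).natDegree = 2 := by
    rw [(monic_X_sub_C a).natDegree_mul (monic_X_sub_C b), natDegree_X_sub_C, natDegree_X_sub_C]
  rw [← card_dvd_filter F hmon hdeg hm]
  congr 1
  apply Finset.filter_congr
  intro f _
  exact (two_dvd_iff F hab f).symm


theorem mon_one_has_root (f : F[X]) (hf : f ∈ Mon F 1) : ∃ a, f.eval a = 0 := by
  rw [mem_Mon] at hf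
  rw [phi_surj F 1 f hf.1 hf.2]
  refine ⟨-(f.coeff 0), ?_⟩
  simp [phi, Fin.sum_univ_one]

theorem aux_nat_ineq (r : ℕ) :
    2 * (if r = 0 then 1 else 0) + 2 * r ≤ 2 + (r * r - r) := by
  rcases r with - | r
  · simp
  · rw [if_neg (Nat.succ_ne_zero r)]
    have : (r + 1) * (r + 1) - (r + 1) = (r + 1) * r := by
      have : (r + 1) * (r + 1) = (r + 1) * r + (r + 1) := by ring
      omega
    rw [this]
    nlinarith

theorem noroot_half {m : ℕ} (hm : 1 ≤ m) :
    2 * ((Mon F m).filter (fun f => ∀ x, f.eval x ≠ 0)).card ≤ Fintype.card F ^ m := by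
  rcases eq_or_lt_of_le hm with h1 | h2
  · have : ((Mon F m).filter (fun f => ∀ x, f.eval x ≠ 0)) = ∅ := by
      rw [Finset.filter_eq_empty_iff]
      intro f hf hnr
      obtain ⟨a, ha⟩ := mon_one_has_root F f (h1 ▸ hf)
      exact hnr a ha
    rw [this]
    simp only [Finset.card_empty, Nat.mul_zero]
    positivity
  · -- m ≥ 2
    set q := Fintype.card F with hq
    have hq2 : 2 ≤ q := Fintype.one_lt_card
    set T := Mon F m with hT
    set r : F[X] → ℕ := fun f => (Finset.univ.filter (fun a => f.eval a = 0)).card with hr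
    have sumA : ∑ f ∈ T, r f = q ^ m := by
      have : ∑ f ∈ T, r f = ∑ a : F, (T.filter (fun f => f.eval a = 0)).card := by
        simp only [hr, Finset.card_filter]
        rw [Finset.sum_comm]
      rw [this]
      rw [Finset.sum_congr rfl (fun a _ => card_root_filter F hm a)]
      simp only [Finset.sum_const, Finset.card_univ, smul_eq_mul, ← hq]
      rw [← pow_succ']
      congr 1
      omega
    have sumB : ∑ f ∈ T, (r f * r f - r f) = (q * q - q) * q ^ (m - 2) := by
      have hoff : ∀ f : F[X], r f * r f - r f
          = ((Finset.univ : Finset F).offDiag.filter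
              (fun ab => f.eval ab.1 = 0 ∧ f.eval ab.2 = 0)).card := by
        intro f
        have : ((Finset.univ.filter (fun a => f.eval a = 0)) : Finset F).offDiag
            = (Finset.univ : Finset F).offDiag.filter
              (fun ab => f.eval ab.1 = 0 ∧ f.eval ab.2 = 0) := by
          ext ⟨a, b⟩
          simp only [Finset.mem_offDiag, Finset.mem_filter, Finset.mem_univ, true_and]
          tauto
        rw [← this, Finset.offDiag_card]
      have : ∑ f ∈ T, (r f * r f - r f)
          = ∑ ab ∈ (Finset.univ : Finset F).offDiag,
              (T.filter (fun f => f.eval ab.1 = 0 ∧ f.eval ab.2 = 0)).card := by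
        simp only [hoff, Finset.card_filter]
        rw [Finset.sum_comm]
      rw [this]
      rw [Finset.sum_congr rfl (fun ab hab =>
        card_two_root_filter F h2 (Finset.mem_offDiag.1 hab).2.2)]
      simp only [Finset.sum_const, smul_eq_mul, Finset.offDiag_card, Finset.card_univ, ← hq]
    have key : 2 * ((T.filter (fun f => ∀ x, f.eval x ≠ 0)).card) + 2 * (q ^ m)
        ≤ 2 * q ^ m + (q * q - q) * q ^ (m - 2) := by
      have perf : ∀ f ∈ T, 2 * (if (∀ x, f.eval x ≠ 0) then 1 else 0) + 2 * r f
          ≤ 2 + (r f * r f - r f) := by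
        intro f _
        have : (∀ x, f.eval x ≠ 0) ↔ r f = 0 := by
          simp only [hr, Finset.card_eq_zero, Finset.filter_eq_empty_iff]
          simp
        have h2 := aux_nat_ineq (r f)
        calc (2 * if ∀ (x : F), f.eval x ≠ 0 then 1 else 0) + 2 * r f
            = (2 * if r f = 0 then 1 else 0) + 2 * r f := by simp only [this]
          _ ≤ 2 + (r f * r f - r f) := h2
      calc 2 * ((T.filter (fun f => ∀ x, f.eval x ≠ 0)).card) + 2 * (q ^ m)
          = ∑ f ∈ T, (2 * (if (∀ x, f.eval x ≠ 0) then 1 else 0) + 2 * r f) := by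
            rw [Finset.sum_add_distrib, ← Finset.mul_sum, ← Finset.mul_sum, sumA,
              ← Finset.card_filter]
        _ ≤ ∑ f ∈ T, (2 + (r f * r f - r f)) := Finset.sum_le_sum perf
        _ = 2 * q ^ m + (q * q - q) * q ^ (m - 2) := by
            rw [Finset.sum_add_distrib, sumB, Finset.sum_const, smul_eq_mul, mul_comm,
              card_Mon]
    have : (q * q - q) * q ^ (m - 2) ≤ q ^ m := by
      calc (q * q - q) * q ^ (m - 2) ≤ q * q * q ^ (m - 2) :=
            Nat.mul_le_mul_right _ (Nat.sub_le _ _)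
        _ = q ^ m := by
            rw [← pow_two, ← pow_add]
            congr 1
            omega
    omega


noncomputable def D (i : ℕ) : Finset F[X] := (Mon F i).filter Irreducible

theorem monic_of_normalized_factor {f p : F[X]} (hp : p ∈ normalizedFactors f) : p.Monic := by
  classical
  have h1 : Irreducible p := irreducible_of_normalized_factor p hp
  have := monic_normalize (R := F) h1.ne_zero
  rwa [normalize_normalized_factor p hp] at this

theorem prod_normalizedFactors_of_monic {f : F[X]} (hf : f.Monic) :
    (normalizedFactors f).prod = f := by
  have h1 : Associated (normalizedFactors f).prod f := prod_normalizedFactors hf.ne_zero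
  refine eq_of_monic_of_associated ?_ hf h1
  have := monic_multiset_prod_of_monic (normalizedFactors f) id
    (fun p hp => monic_of_normalized_factor F hp)
  simpa using this

theorem natDegree_normalize (p : F[X]) : (normalize p).natDegree = p.natDegree :=
  natDegree_eq_of_degree_eq (degree_eq_degree_of_associated (normalize_associated p))

theorem card_filter_factors (f : F[X]) (i : ℕ) :
    Multiset.card ((factors f).filter (fun p => p.natDegree = i))
      = Multiset.card ((normalizedFactors f).filter (fun p => p.natDegree = i)) := by
  rw [show normalizedFactors f = Multiset.map normalize (factors f) from rfl]
  rw [Multiset.filter_map, Multiset.card_map]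
  congr 1
  apply Multiset.filter_congr
  intro p _
  simp [Function.comp, natDegree_normalize]

theorem two_mul_card_D_le {i : ℕ} (hi : 2 ≤ i) :
    2 * (D F i).card ≤ Fintype.card F ^ i := by
  have hsub : D F i ⊆ (Mon F i).filter (fun f => ∀ x, f.eval x ≠ 0) := by
    intro p hp
    rw [D, Finset.mem_filter] at hp
    obtain ⟨hpm, hirr⟩ := hp
    rw [mem_Mon] at hpm
    rw [Finset.mem_filter, mem_Mon]
    refine ⟨hpm, fun x hx => ?_⟩
    obtain ⟨g, rfl⟩ := (dvd_iff_isRoot).2 hx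
    rcases hirr.isUnit_or_isUnit rfl with h | h
    · exact (not_isUnit_of_natDegree_pos _ (by simp [natDegree_X_sub_C])) h
    · have hg : g.Monic := (monic_X_sub_C x).of_mul_monic_left hpm.1
      have : ((X - C x) * g).natDegree = 1 + g.natDegree :=
        (monic_X_sub_C x).natDegree_mul hg |>.trans (by rw [natDegree_X_sub_C])
      exact (not_isUnit_of_natDegree_pos g (by omega)) h
  calc 2 * (D F i).card ≤ 2 * ((Mon F i).filter (fun f => ∀ x, f.eval x ≠ 0)).card :=
        Nat.mul_le_mul_left _ (Finset.card_le_card hsub)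
    _ ≤ Fintype.card F ^ i := noroot_half F (by omega)

theorem card_D_le (i : ℕ) : (D F i).card ≤ Fintype.card F ^ i := by
  calc (D F i).card ≤ (Mon F i).card := Finset.card_le_card (Finset.filter_subset _ _)
    _ = Fintype.card F ^ i := card_Mon F i

theorem cofactor_props {n i lam : ℕ} (hi : 1 ≤ i) {f : F[X]} (hf : f ∈ Mon F n)
    (hE : Multiset.card ((normalizedFactors f).filter (fun p => p.natDegree = i)) = lam) :
    f = ((normalizedFactors f).filter (fun p => p.natDegree = i)).prod *
        ((normalizedFactors f).filter (fun p => ¬ p.natDegree = i)).prod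
    ∧ i * lam ≤ n
    ∧ ((normalizedFactors f).filter (fun p => ¬ p.natDegree = i)).prod ∈ Mon F (n - i * lam)
    ∧ ∀ p ∈ normalizedFactors
        (((normalizedFactors f).filter (fun p => ¬ p.natDegree = i)).prod), p.natDegree ≠ i := by
  rw [mem_Mon] at hf
  obtain ⟨hm, hd⟩ := hf
  set s := (normalizedFactors f).filter (fun p => p.natDegree = i) with hs
  set t := (normalizedFactors f).filter (fun p => ¬ p.natDegree = i) with ht
  have hsplit : s + t = normalizedFactors f := Multiset.filter_add_not _ _
  have hprod : f = s.prod * t.prod := by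
    rw [← Multiset.prod_add, hsplit, prod_normalizedFactors_of_monic F hm]
  have hmon_t : t.prod.Monic := by
    have := monic_multiset_prod_of_monic t id
      (fun p hp => monic_of_normalized_factor F (Multiset.mem_filter.1 hp).1)
    simpa using this
  have hmon_s : s.prod.Monic := by
    have := monic_multiset_prod_of_monic s id
      (fun p hp => monic_of_normalized_factor F (Multiset.mem_filter.1 hp).1)
    simpa using this
  have hdeg_s : s.prod.natDegree = i * lam := by
    rw [natDegree_multiset_prod_of_monic _
      (fun p hp => monic_of_normalized_factor F (Multiset.mem_filter.1 hp).1)]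
    have : s.map natDegree = Multiset.replicate lam i := by
      apply Multiset.eq_replicate.2
      constructor
      · rw [Multiset.card_map]; exact hE
      · intro b hb
        obtain ⟨p, hp, rfl⟩ := Multiset.mem_map.1 hb
        exact (Multiset.mem_filter.1 hp).2
    rw [this, Multiset.sum_replicate, smul_eq_mul, mul_comm]
  have hdeg : i * lam + t.prod.natDegree = n := by
    have := hmon_s.natDegree_mul hmon_t
    rw [← hprod, hd, hdeg_s] at this
    omega
  have hle : i * lam ≤ n := by omega
  have hfactors_t : normalizedFactors t.prod = t := by
    rw [normalizedFactors_prod_eq t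
      (fun p hp => irreducible_of_normalized_factor p (Multiset.mem_filter.1 hp).1)]
    have : Multiset.map normalize t = Multiset.map id t :=
      Multiset.map_congr rfl
        (fun p hp => normalize_normalized_factor p (Multiset.mem_filter.1 hp).1)
    rw [this, Multiset.map_id]
  refine ⟨hprod, hle, ?_, ?_⟩
  · rw [mem_Mon]
    exact ⟨hmon_t, by omega⟩
  · intro p hp
    rw [hfactors_t] at hp
    exact (Multiset.mem_filter.1 hp).2

theorem main_count (n i lam : ℕ) (hi : 1 ≤ i) :
    ((Mon F n).filter (fun f =>
        Multiset.card ((normalizedFactors f).filter (fun p => p.natDegree = i)) = lam)).card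
      ≤ (((D F i).card + lam - 1).choose lam) *
        ((Mon F (n - i * lam)).filter
          (fun h => ∀ p ∈ normalizedFactors h, p.natDegree ≠ i)).card := by
  classical
  set T₁ : Finset (Multiset F[X]) :=
    (Finset.univ : Finset (Sym {p // p ∈ D F i} lam)).image
      (fun x => x.1.map Subtype.val) with hT₁
  set T₂ := (Mon F (n - i * lam)).filter
      (fun h => ∀ p ∈ normalizedFactors h, p.natDegree ≠ i) with hT₂
  have hcard : ((Mon F n).filter (fun f =>
      Multiset.card ((normalizedFactors f).filter (fun p => p.natDegree = i)) = lam)).card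
      ≤ (T₁ ×ˢ T₂).card := by
    apply Finset.card_le_card_of_injOn
      (fun f => (((normalizedFactors f).filter (fun p => p.natDegree = i)),
        ((normalizedFactors f).filter (fun p => ¬ p.natDegree = i)).prod))
    · intro f hf
      rw [Finset.mem_coe, Finset.mem_filter] at hf
      obtain ⟨hfM, hE⟩ := hf
      obtain ⟨hprod, hle, hmem, hnf⟩ := cofactor_props F hi hfM hE
      rw [Finset.mem_coe, Finset.mem_product]
      constructor
      · rw [hT₁, Finset.mem_image]
        have memD : ∀ p ∈ (normalizedFactors f).filter (fun p => p.natDegree = i),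
            p ∈ D F i := by
          intro p hp
          obtain ⟨hp1, hp2⟩ := Multiset.mem_filter.1 hp
          rw [D, Finset.mem_filter, mem_Mon]
          exact ⟨⟨monic_of_normalized_factor F hp1, hp2⟩, irreducible_of_normalized_factor p hp1⟩
        refine ⟨⟨((normalizedFactors f).filter (fun p => p.natDegree = i)).attach.map
            (fun y => (⟨y.1, memD y.1 y.2⟩ : {p // p ∈ D F i})), ?_⟩,
          Finset.mem_univ _, ?_⟩
        · rw [Multiset.card_map, Multiset.card_attach]
          exact hE
        · simp only [Multiset.map_map, Function.comp]
          exact Multiset.attach_map_val' _ _ |>.trans (Multiset.map_id _)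
      · simp only [hT₂, Finset.mem_filter]
        exact ⟨hmem, hnf⟩
    · intro f₁ hf₁ f₂ hf₂ heq
      rw [Finset.coe_filter, Set.mem_setOf_eq] at hf₁ hf₂
      obtain ⟨hprod₁, -, -, -⟩ := cofactor_props F hi hf₁.1 hf₁.2
      obtain ⟨hprod₂, -, -, -⟩ := cofactor_props F hi hf₂.1 hf₂.2
      rw [Prod.mk.injEq] at heq
      rw [hprod₁, hprod₂, heq.1, heq.2]
  calc _ ≤ (T₁ ×ˢ T₂).card := hcard
    _ = T₁.card * T₂.card := Finset.card_product _ _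
    _ ≤ (((D F i).card + lam - 1).choose lam) * T₂.card := by
        apply Nat.mul_le_mul_right
        calc T₁.card ≤ (Finset.univ : Finset (Sym {p // p ∈ D F i} lam)).card :=
              Finset.card_image_le
          _ = (((D F i).card + lam - 1).choose lam) := by
              rw [Finset.card_univ, Sym.card_sym_eq_choose, Fintype.card_coe]


theorem no_deg_one_no_root {h : F[X]} (h0 : h ≠ 0)
    (hnf : ∀ p ∈ normalizedFactors h, p.natDegree ≠ 1) : ∀ a, h.eval a ≠ 0 := by
  intro a ha
  have hdvd : (X - C a) ∣ h := dvd_iff_isRoot.2 ha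
  obtain ⟨p, hp, hassoc⟩ := exists_mem_normalizedFactors_of_dvd h0 (irreducible_X_sub_C a) hdvd
  have : p.natDegree = 1 := by
    rw [← natDegree_eq_of_degree_eq (degree_eq_degree_of_associated hassoc), natDegree_X_sub_C]
  exact hnf p hp this

theorem choose_succ_cast (m lam : ℕ) (hm : 1 ≤ m) :
    ((m + (lam + 1) - 1).choose (lam + 1) : ℝ) * ((lam : ℝ) + 1)
      = ((m : ℝ) + lam) * ((m + lam - 1).choose lam) := by
  have h1 : m + (lam + 1) - 1 = (m + lam - 1) + 1 := by omega
  have h2 : (m + lam - 1) + 1 = m + lam := by omega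
  have h3 := Nat.add_one_mul_choose_eq (m + lam - 1) lam
  rw [h2] at h3
  rw [h1, h2]
  have : ((m + lam).choose (lam + 1) * (lam + 1) : ℝ) = ((m + lam : ℕ) : ℝ) * ((m + lam - 1).choose lam) := by
    exact_mod_cast congrArg (Nat.cast : ℕ → ℝ) h3.symm
  push_cast at this ⊢
  linarith [this]

theorem chooseA {M m : ℕ} (hm : 2 * m ≤ M) (hM : 4 ≤ M) (lam : ℕ) :
    ((m + lam - 1).choose lam : ℝ) ≤ (3 / 4) ^ lam * (M : ℝ) ^ lam := by
  induction lam with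
  | zero => simp
  | succ lam ih =>
    rcases Nat.eq_zero_or_pos m with rfl | hm1
    · rw [Nat.zero_add, Nat.choose_eq_zero_of_lt (by omega)]
      push_cast
      positivity
    have key := choose_succ_cast m lam hm1
    have hlam1 : (0:ℝ) < (lam : ℝ) + 1 := by positivity
    have hratio : ((m : ℝ) + lam) ≤ (3 / 4) * M * ((lam : ℝ) + 1) := by
      have hmr : 2 * (m : ℝ) ≤ M := by exact_mod_cast hm
      have hMr : (4 : ℝ) ≤ M := by exact_mod_cast hM
      have hl : (0:ℝ) ≤ (lam : ℝ) := Nat.cast_nonneg lam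
      nlinarith
    have hC1 : (0:ℝ) ≤ ((m + lam - 1).choose lam : ℝ) := Nat.cast_nonneg _
    have step : ((m + (lam + 1) - 1).choose (lam + 1) : ℝ) * ((lam : ℝ) + 1)
        ≤ ((3 / 4) * M * ((lam : ℝ) + 1)) * ((3 / 4) ^ lam * (M : ℝ) ^ lam) := by
      rw [key]
      apply mul_le_mul hratio ih hC1 (by positivity)
    calc ((m + (lam + 1) - 1).choose (lam + 1) : ℝ)
        = ((m + (lam + 1) - 1).choose (lam + 1) : ℝ) * ((lam : ℝ) + 1) / ((lam : ℝ) + 1) := by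
          field_simp
      _ ≤ ((3 / 4) * M * ((lam : ℝ) + 1)) * ((3 / 4) ^ lam * (M : ℝ) ^ lam) / ((lam : ℝ) + 1) :=
          div_le_div_of_nonneg_right step hlam1.le
      _ = (3 / 4) ^ (lam + 1) * (M : ℝ) ^ (lam + 1) := by
          field_simp
          ring

theorem chooseB {q m : ℕ} (hm : m ≤ q) (hq : 2 ≤ q) (lam : ℕ) (hlam : 1 ≤ lam) :
    ((m + lam - 1).choose lam : ℝ) ≤ (3 / 4) ^ (lam - 1) * (q : ℝ) ^ lam := by
  induction lam with
  | zero => omega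
  | succ lam ih =>
    rcases Nat.eq_zero_or_pos lam with rfl | hlam1
    · rw [show m + (0 + 1) - 1 = m from by omega, show (0:ℕ) + 1 = 1 from rfl,
        Nat.choose_one_right, show (1:ℕ) - 1 = 0 from rfl, pow_zero, one_mul, pow_one]
      exact_mod_cast hm
    rcases Nat.eq_zero_or_pos m with rfl | hm1
    · rw [Nat.zero_add, Nat.choose_eq_zero_of_lt (by omega)]
      push_cast
      positivity
    have ih' := ih hlam1
    have key := choose_succ_cast m lam hm1
    have hlamr : (0:ℝ) < (lam : ℝ) + 1 := by positivity
    have hratio : ((m : ℝ) + lam) ≤ (3 / 4) * q * ((lam : ℝ) + 1) := by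
      have hmr : (m : ℝ) ≤ q := by exact_mod_cast hm
      have hqr : (2 : ℝ) ≤ q := by exact_mod_cast hq
      have hl : (1:ℝ) ≤ (lam : ℝ) := by exact_mod_cast hlam1
      nlinarith
    have hC1 : (0:ℝ) ≤ ((m + lam - 1).choose lam : ℝ) := Nat.cast_nonneg _
    have step : ((m + (lam + 1) - 1).choose (lam + 1) : ℝ) * ((lam : ℝ) + 1)
        ≤ ((3 / 4) * q * ((lam : ℝ) + 1)) * ((3 / 4) ^ (lam - 1) * (q : ℝ) ^ lam) := by
      rw [key]
      apply mul_le_mul hratio ih' hC1 (by positivity)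
    have hexp : lam + 1 - 1 = (lam - 1) + 1 := by omega
    calc ((m + (lam + 1) - 1).choose (lam + 1) : ℝ)
        = ((m + (lam + 1) - 1).choose (lam + 1) : ℝ) * ((lam : ℝ) + 1) / ((lam : ℝ) + 1) := by
          field_simp
      _ ≤ ((3 / 4) * q * ((lam : ℝ) + 1)) * ((3 / 4) ^ (lam - 1) * (q : ℝ) ^ lam) / ((lam : ℝ) + 1) :=
          div_le_div_of_nonneg_right step hlamr.le
      _ = (3 / 4) ^ (lam + 1 - 1) * (q : ℝ) ^ (lam + 1) := by
          rw [hexp]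
          field_simp
          ring


theorem natcard_eq (n i lam : ℕ) :
    Nat.card {co : Fin n → F //
        Multiset.card ((factors
            (X ^ n + ∑ j : Fin n, C (co j) * X ^ (j : ℕ))).filter
          (fun p => p.natDegree = i)) = lam}
      = ((Mon F n).filter (fun f =>
          Multiset.card ((normalizedFactors f).filter (fun p => p.natDegree = i)) = lam)).card := by
  classical
  rw [Nat.card_eq_fintype_card, Fintype.card_subtype]
  have h1 : (Finset.univ.filter (fun co : Fin n → F =>
      Multiset.card ((factors (X ^ n + ∑ j : Fin n, C (co j) * X ^ (j : ℕ))).filter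
        (fun p => p.natDegree = i)) = lam)).card
      = ((Mon F n).filter (fun f =>
          Multiset.card ((factors f).filter (fun p => p.natDegree = i)) = lam)).card := by
    rw [Mon, Finset.filter_image]
    rw [Finset.card_image_of_injective _ (phi_injective F n)]
    congr 1
  rw [h1]
  congr 1
  apply Finset.filter_congr
  intro f _
  rw [card_filter_factors]

theorem pow39 (lam : ℕ) (hlam : 2 ≤ lam) : (3 / 4 : ℝ) ^ (lam - 1) ≤ (9 / 10 : ℝ) ^ lam := by
  induction lam with
  | zero => omega
  | succ lam ih =>
    rcases Nat.lt_or_ge lam 2 with h | h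
    · interval_cases lam
      · omega
      · norm_num
    · have := ih (by omega)
      have h2 : lam + 1 - 1 = (lam - 1) + 1 := by omega
      rw [h2, pow_succ, pow_succ]
      have h34 : (0:ℝ) ≤ (3/4:ℝ) ^ (lam - 1) := by positivity
      nlinarith [this]

theorem pow_base_le (lam : ℕ) : (3 / 4 : ℝ) ^ lam ≤ (9 / 10 : ℝ) ^ lam :=
  pow_le_pow_left₀ (by norm_num) (by norm_num) lam

theorem main_bound (n i lam : ℕ) (hn : 2 ≤ n) (hi1 : 1 ≤ i) (hin : i ≤ n) :
    (((Mon F n).filter (fun f =>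
        Multiset.card ((normalizedFactors f).filter (fun p => p.natDegree = i)) = lam)).card : ℝ)
      ≤ (9 / 10 : ℝ) ^ lam * (Fintype.card F : ℝ) ^ n := by
  classical
  set q := Fintype.card F with hq
  have hq2 : 2 ≤ q := Fintype.one_lt_card
  have hqr : (2:ℝ) ≤ (q:ℝ) := by exact_mod_cast hq2
  have hqpos : (0:ℝ) < (q:ℝ) := by linarith
  set E := (Mon F n).filter (fun f =>
      Multiset.card ((normalizedFactors f).filter (fun p => p.natDegree = i)) = lam) with hE
  by_cases hbig : n < i * lam
  · -- E is empty
    have : E = ∅ := by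
      rw [hE, Finset.filter_eq_empty_iff]
      intro f hf hcard
      have := (cofactor_props F hi1 hf hcard).2.1
      omega
    rw [this]
    simp only [Finset.card_empty, Nat.cast_zero]
    positivity
  · push_neg at hbig
    set d := n - i * lam with hd
    have hmain := main_count F n i lam hi1
    set T₂ := (Mon F d).filter
        (fun h => ∀ p ∈ normalizedFactors h, p.natDegree ≠ i) with hT₂
    set m := (D F i).card with hm
    have hEr : (E.card : ℝ) ≤ ((m + lam - 1).choose lam : ℝ) * (T₂.card : ℝ) := by
      exact_mod_cast Nat.cast_le.2 hmain
    have hsub2 : T₂ ⊆ Mon F d := by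
      intro x hx
      simp only [hT₂, Finset.mem_filter] at hx
      exact hx.1
    rcases Nat.lt_or_ge i 2 with hi2 | hi2
    · -- i = 1
      have hi : i = 1 := by omega
      subst hi
      have hmq : m ≤ q := by
        have := card_D_le F 1
        simpa using this
      rcases Nat.eq_zero_or_pos lam with rfl | hlam1
      · -- lam = 0 : trivial bound
        have : (E.card : ℝ) ≤ (q:ℝ) ^ n := by
          have h1 : E.card ≤ (Mon F n).card := Finset.card_le_card (Finset.filter_subset _ _)
          rw [card_Mon] at h1
          exact_mod_cast h1
        simpa using this
      have hC : ((m + lam - 1).choose lam : ℝ) ≤ (3/4:ℝ) ^ (lam - 1) * (q:ℝ) ^ lam :=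
        chooseB hmq hq2 lam hlam1
      have hT₂sub : T₂ ⊆ (Mon F d).filter (fun f => ∀ x, f.eval x ≠ 0) := by
        intro h hh
        simp only [hT₂, Finset.mem_filter] at hh
        obtain ⟨hhm, hhnf⟩ := hh
        simp only [Finset.mem_filter]
        refine ⟨hhm, ?_⟩
        have h0 : h ≠ 0 := ((mem_Mon F d h).1 hhm).1.ne_zero
        intro x
        exact no_deg_one_no_root F h0 (fun p hp hp1 => hhnf p hp hp1) x
      rcases Nat.eq_zero_or_pos d with hd0 | hd1
      · -- lam = n
        have hlamn : lam = n := by omega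
        have hT₂1 : T₂.card ≤ 1 := by
          calc T₂.card ≤ (Mon F d).card := Finset.card_le_card hsub2
            _ = q ^ d := card_Mon F d
            _ = 1 := by rw [hd0, pow_zero]
        have h2lam : 2 ≤ lam := by omega
        calc (E.card : ℝ) ≤ ((m + lam - 1).choose lam : ℝ) * (T₂.card : ℝ) := hEr
          _ ≤ ((3/4:ℝ) ^ (lam - 1) * (q:ℝ) ^ lam) * 1 := by
              apply mul_le_mul hC ?_ (Nat.cast_nonneg _) (by positivity)
              exact_mod_cast hT₂1
          _ = (3/4:ℝ) ^ (lam - 1) * (q:ℝ) ^ n := by rw [mul_one, hlamn]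
          _ ≤ (9/10:ℝ) ^ lam * (q:ℝ) ^ n := by
              apply mul_le_mul_of_nonneg_right (pow39 lam h2lam) (by positivity)
      · -- lam < n
        have h2T : 2 * T₂.card ≤ q ^ d := by
          calc 2 * T₂.card ≤ 2 * ((Mon F d).filter (fun f => ∀ x, f.eval x ≠ 0)).card :=
                Nat.mul_le_mul_left _ (Finset.card_le_card hT₂sub)
            _ ≤ q ^ d := noroot_half F hd1
        have hT₂r : (T₂.card : ℝ) ≤ (q:ℝ) ^ d / 2 := by
          rw [le_div_iff₀ (by norm_num : (0:ℝ) < 2)]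
          calc (T₂.card : ℝ) * 2 = ((2 * T₂.card : ℕ) : ℝ) := by push_cast; ring
            _ ≤ ((q ^ d : ℕ) : ℝ) := Nat.cast_le.2 h2T
            _ = (q:ℝ) ^ d := by push_cast; ring
        have hqlam : (0:ℝ) ≤ (q:ℝ) ^ lam := by positivity
        calc (E.card : ℝ) ≤ ((m + lam - 1).choose lam : ℝ) * (T₂.card : ℝ) := hEr
          _ ≤ ((3/4:ℝ) ^ (lam - 1) * (q:ℝ) ^ lam) * ((q:ℝ) ^ d / 2) :=
              mul_le_mul hC hT₂r (Nat.cast_nonneg _) (by positivity)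
          _ = ((1/2:ℝ) * (3/4:ℝ) ^ (lam - 1)) * ((q:ℝ) ^ lam * (q:ℝ) ^ d) := by ring
          _ = ((1/2:ℝ) * (3/4:ℝ) ^ (lam - 1)) * (q:ℝ) ^ n := by
              rw [← pow_add]
              congr 2
              omega
          _ ≤ (9/10:ℝ) ^ lam * (q:ℝ) ^ n := by
              apply mul_le_mul_of_nonneg_right ?_ (by positivity)
              have hhalf : (1/2:ℝ) * (3/4:ℝ) ^ (lam - 1) ≤ (3/4:ℝ) ^ lam := by
                have h34 : (0:ℝ) ≤ (3/4:ℝ) ^ (lam - 1) := by positivity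
                have hsucc : (3/4:ℝ) ^ lam = (3/4:ℝ) ^ (lam - 1) * (3/4) := by
                  rw [← pow_succ]
                  congr 1
                  omega
                rw [hsucc]
                nlinarith
              exact hhalf.trans (pow_base_le lam)
    · -- i ≥ 2
      have hM4 : 4 ≤ q ^ i := by
        calc 4 = 2 ^ 2 := by norm_num
          _ ≤ q ^ 2 := Nat.pow_le_pow_left hq2 2
          _ ≤ q ^ i := Nat.pow_le_pow_right (by omega) hi2
      have h2m : 2 * m ≤ q ^ i := two_mul_card_D_le F hi2
      have hC : ((m + lam - 1).choose lam : ℝ) ≤ (3/4:ℝ) ^ lam * ((q ^ i : ℕ) : ℝ) ^ lam :=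
        chooseA h2m hM4 lam
      have hT₂le : (T₂.card : ℝ) ≤ (q:ℝ) ^ d := by
        have h1 : T₂.card ≤ (Mon F d).card := Finset.card_le_card hsub2
        rw [card_Mon] at h1
        exact_mod_cast h1
      calc (E.card : ℝ) ≤ ((m + lam - 1).choose lam : ℝ) * (T₂.card : ℝ) := hEr
        _ ≤ ((3/4:ℝ) ^ lam * ((q ^ i : ℕ) : ℝ) ^ lam) * ((q:ℝ) ^ d) :=
            mul_le_mul hC hT₂le (Nat.cast_nonneg _) (by positivity)
        _ = (3/4:ℝ) ^ lam * (q:ℝ) ^ (i * lam + d) := by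
            push_cast
            rw [← pow_mul, pow_add]
            ring
        _ = (3/4:ℝ) ^ lam * (q:ℝ) ^ n := by
            congr 2
            omega
        _ ≤ (9/10:ℝ) ^ lam * (q:ℝ) ^ n :=
            mul_le_mul_of_nonneg_right (pow_base_le lam) (by positivity)

end Stmt8

end Aux

/-- There is an absolute constant `c > 0` such that for every finite field with `q`
elements, every `n ≥ 2`, every `1 ≤ i ≤ n` and every `λ ≥ 0`, the probability that a
uniformly random monic polynomial of degree `n` has exactly `λ` irreducible factors of
degree `i` (counted with multiplicity) is at most `e^{-cλ}`. -/
theorem stmt8 :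
    ∃ c : ℝ, 0 < c ∧
      ∀ (F : Type) (_ : Field F) (_ : Fintype F) (q n i lam : ℕ),
        q = Fintype.card F → 2 ≤ n → 1 ≤ i → i ≤ n →
        (Nat.card {co : Fin n → F //
            Multiset.card ((UniqueFactorizationMonoid.factors
                (X ^ n + ∑ j : Fin n, C (co j) * X ^ (j : ℕ))).filter
              (fun p => p.natDegree = i)) = lam} : ℝ)
          / (q : ℝ) ^ n ≤ Real.exp (-c * lam) := by
  refine ⟨-Real.log (9 / 10), ?_, ?_⟩
  · have := Real.log_neg (by norm_num : (0:ℝ) < 9/10) (by norm_num : (9/10:ℝ) < 1)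
    linarith
  intro F hF hFt q n i lam hqcard hn hi1 hin
  subst hqcard
  have hqpos : (0:ℝ) < (Fintype.card F : ℝ) ^ n := by
    have : (0:ℕ) < Fintype.card F := Fintype.card_pos
    positivity
  have hexp : Real.exp (-(-Real.log (9 / 10)) * (lam : ℝ)) = (9/10 : ℝ) ^ lam := by
    rw [neg_neg, mul_comm, Real.exp_nat_mul, Real.exp_log (by norm_num : (0:ℝ) < 9/10)]
  rw [Stmt8.natcard_eq F n i lam, hexp, div_le_iff₀ hqpos]
  exact Stmt8.main_bound F n i lam hn hi1 hin
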